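/- Let α₁(v) = 1 - (1 + exp(-γ(v-c)))⁻¹ and α̃₁(v) = 1 - (1 + exp(-γ̃(v-c̃)))⁻¹ with γ, γ̃ > 0, and suppose α₁ and α̃₁ are not identically equal. Then the set of vectors {(α₁(v), -α̃₁(v), 1) : v ∈ ℝ} spans all of ℝ³. Consequently the only w ∈ ℝ³ satisfying α₁(v) w₁ - α̃₁(v) w₂ + w₃ = 0 for all v ∈ ℝ is w = 0. -/
import Mathlib


open Filter Topology

private lemma logistic_tendsto_atTop (γ c : ℝ) (hγ : 0 < γ) :
    Tendsto (fun v : ℝ => 1 - (1 + Real.exp (-γ * (v - c)))⁻¹) atTop (𝓝 0) := by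
  have h0 : Tendsto (fun v : ℝ => v - c) atTop atTop := by
    simpa [sub_eq_add_neg] using tendsto_atTop_add_const_right atTop (-c) (tendsto_id (α := ℝ))
  have h1 : Tendsto (fun v : ℝ => -γ * (v - c)) atTop atBot :=
    Tendsto.const_mul_atTop_of_neg (neg_neg_of_pos hγ) h0
  have h2 : Tendsto (fun v : ℝ => Real.exp (-γ * (v - c))) atTop (𝓝 0) :=
    Real.tendsto_exp_atBot.comp h1
  have h3 : Tendsto (fun v : ℝ => (1 + Real.exp (-γ * (v - c)))⁻¹) atTop (𝓝 1) := by
    have : Tendsto (fun v : ℝ => (1 + Real.exp (-γ * (v - c)))⁻¹) atTop (𝓝 ((1 + 0 : ℝ)⁻¹)) :=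
      (((tendsto_const_nhds : Tendsto (fun _ : ℝ => (1:ℝ)) atTop (𝓝 1)).add h2).inv₀ (by norm_num))
    simpa using this
  have : Tendsto (fun v : ℝ => 1 - (1 + Real.exp (-γ * (v - c)))⁻¹) atTop (𝓝 (1 - 1 : ℝ)) :=
    (tendsto_const_nhds : Tendsto (fun _ : ℝ => (1:ℝ)) atTop (𝓝 1)).sub h3
  simpa using this

private lemma logistic_tendsto_atBot (γ c : ℝ) (hγ : 0 < γ) :
    Tendsto (fun v : ℝ => 1 - (1 + Real.exp (-γ * (v - c)))⁻¹) atBot (𝓝 1) := by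
  have h0 : Tendsto (fun v : ℝ => v - c) atBot atBot := by
    simpa [sub_eq_add_neg] using tendsto_atBot_add_const_right atBot (-c) (tendsto_id (α := ℝ))
  have h1 : Tendsto (fun v : ℝ => -γ * (v - c)) atBot atTop :=
    Tendsto.const_mul_atBot_of_neg (neg_neg_of_pos hγ) h0
  have h2 : Tendsto (fun v : ℝ => Real.exp (-γ * (v - c))) atBot atTop :=
    Real.tendsto_exp_atTop.comp h1
  have h3 : Tendsto (fun v : ℝ => (1 + Real.exp (-γ * (v - c)))⁻¹) atBot (𝓝 0) :=
    (tendsto_inv_atTop_zero).comp (tendsto_atTop_add_const_left _ 1 h2)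
  have : Tendsto (fun v : ℝ => 1 - (1 + Real.exp (-γ * (v - c)))⁻¹) atBot (𝓝 (1 - 0 : ℝ)) :=
    (tendsto_const_nhds : Tendsto (fun _ : ℝ => (1:ℝ)) atBot (𝓝 1)).sub h3
  simpa using this


/-- If two logistic transition weights `α₁` and `α̃₁` are not identically equal, then
the vectors `(α₁(v), -α̃₁(v), 1)` span `ℝ³`; consequently the only `w ∈ ℝ³` with
`α₁(v) w₁ - α̃₁(v) w₂ + w₃ = 0` for all `v` is `w = 0`. -/
theorem logistic_vectors_span (γ γt c ct : ℝ) (hγ : 0 < γ) (hγt : 0 < γt)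
    (α₁ αt₁ : ℝ → ℝ)
    (hα : ∀ v, α₁ v = 1 - (1 + Real.exp (-γ * (v - c)))⁻¹)
    (hαt : ∀ v, αt₁ v = 1 - (1 + Real.exp (-γt * (v - ct)))⁻¹)
    (hne : ∃ v, α₁ v ≠ αt₁ v) :
    Submodule.span ℝ (Set.range fun v : ℝ => ![α₁ v, -αt₁ v, (1 : ℝ)]) = ⊤ ∧
      ∀ w : Fin 3 → ℝ, (∀ v : ℝ, α₁ v * w 0 - αt₁ v * w 1 + w 2 = 0) → w = 0 := by
  have hαT : Tendsto α₁ atTop (𝓝 0) := by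
    simpa [funext hα] using logistic_tendsto_atTop γ c hγ
  have hαB : Tendsto α₁ atBot (𝓝 1) := by
    simpa [funext hα] using logistic_tendsto_atBot γ c hγ
  have hαtT : Tendsto αt₁ atTop (𝓝 0) := by
    simpa [funext hαt] using logistic_tendsto_atTop γt ct hγt
  have hαtB : Tendsto αt₁ atBot (𝓝 1) := by
    simpa [funext hαt] using logistic_tendsto_atBot γt ct hγt
  have key : ∀ w : Fin 3 → ℝ, (∀ v : ℝ, α₁ v * w 0 - αt₁ v * w 1 + w 2 = 0) → w = 0 := by
    intro w hw
    set a := w 0; set b := w 1; set d := w 2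
    have hT : Tendsto (fun v => α₁ v * a - αt₁ v * b + d) atTop (𝓝 (0 * a - 0 * b + d)) :=
      ((hαT.mul_const a).sub (hαtT.mul_const b)).add_const d
    have hB : Tendsto (fun v => α₁ v * a - αt₁ v * b + d) atBot (𝓝 (1 * a - 1 * b + d)) :=
      ((hαB.mul_const a).sub (hαtB.mul_const b)).add_const d
    have h0T : Tendsto (fun v => α₁ v * a - αt₁ v * b + d) atTop (𝓝 0) := by
      simp only [funext hw]; exact tendsto_const_nhds
    have h0B : Tendsto (fun v => α₁ v * a - αt₁ v * b + d) atBot (𝓝 0) := by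
      simp only [funext hw]; exact tendsto_const_nhds
    have hd : d = 0 := by have := tendsto_nhds_unique hT h0T; linarith
    have hab : a = b := by have := tendsto_nhds_unique hB h0B; linarith
    obtain ⟨v₀, hv₀⟩ := hne
    have ha : a = 0 := by
      have := hw v₀
      rw [hd, hab] at this
      rcases mul_eq_zero.mp (by linarith : (α₁ v₀ - αt₁ v₀) * b = 0) with h | h
      · exact absurd (by linarith : α₁ v₀ = αt₁ v₀) hv₀
      · rw [hab]; exact h
    funext i
    fin_cases i
    · exact ha
    · show w 1 = 0
      rw [show w 1 = b from rfl, ← hab]; exact ha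
    · exact hd
  refine ⟨?_, key⟩
  by_contra hn
  obtain ⟨f, hf0, hfbot⟩ := Submodule.exists_dual_map_eq_bot_of_lt_top
    (lt_top_iff_ne_top.mpr hn) inferInstance
  have hfv : ∀ v : ℝ, f ![α₁ v, -αt₁ v, (1:ℝ)] = 0 := by
    intro v
    have hmem : (![α₁ v, -αt₁ v, (1:ℝ)] : Fin 3 → ℝ) ∈
        Submodule.span ℝ (Set.range fun v : ℝ => ![α₁ v, -αt₁ v, (1 : ℝ)]) :=
      Submodule.subset_span ⟨v, rfl⟩
    have := Submodule.mem_map_of_mem (f := f) hmem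
    rw [hfbot] at this
    simpa using this
  set e : Fin 3 → (Fin 3 → ℝ) := fun i => Pi.single i 1 with he
  have hdecomp : ∀ v : ℝ, (![α₁ v, -αt₁ v, (1:ℝ)] : Fin 3 → ℝ)
      = α₁ v • e 0 + (-αt₁ v) • e 1 + (1:ℝ) • e 2 := by
    intro v
    funext i
    fin_cases i <;> simp [he]
  have hw : ∀ v : ℝ, α₁ v * f (e 0) - αt₁ v * f (e 1) + f (e 2) = 0 := by
    intro v
    have := hfv v
    rw [hdecomp v] at this
    simp only [map_add, map_smul, smul_eq_mul] at this
    linear_combination this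
  have := key ![f (e 0), f (e 1), f (e 2)] (by intro v; simpa using hw v)
  apply hf0
  have h0 : ∀ i, f (e i) = 0 := by
    intro i
    fin_cases i
    · simpa using congrFun this 0
    · have h := congrFun this 1
      simp at h
      show f (e 1) = 0
      exact h
    · simpa using congrFun this 2
  apply LinearMap.ext
  intro x
  have hx : x = x 0 • e 0 + x 1 • e 1 + x 2 • e 2 := by
    funext i; fin_cases i <;> simp [he]
  rw [hx]
  simp [map_add, map_smul, h0]
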